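/- arXiv:2603.04661 — 2 statements merged into one kernel-verified Lean document; each statement's English description precedes it below -/
import Mathlib

section
/- Let α : [0,T] → ℝ be continuously differentiable with α(0) = 0, α(t) ≥ 0 and α'(t) ≥ 0, let σ > 0 and 0 < ε < 1, and set I(t) = α'(t)/(1+σα(t))^{1-ε} and R(t) = α'(t)/(1+σα(t)). Then ∫₀ᵀ R(t)² dt ≤ (1/(σε))·sup_{t∈[0,T]} I(t). -/
theorem stmt_7 (σ ε T : ℝ) (hσ : 0 < σ) (hε0 : 0 < ε) (hε1 : ε < 1) (hT : 0 < T)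
    (α α' : ℝ → ℝ) (hα' : ContinuousOn α' (Set.Icc 0 T))
    (hd : ∀ t ∈ Set.Icc (0:ℝ) T, HasDerivAt α (α' t) t)
    (hα0 : α 0 = 0) (hαpos : ∀ t ∈ Set.Icc (0:ℝ) T, 0 ≤ α t)
    (hα'pos : ∀ t ∈ Set.Icc (0:ℝ) T, 0 ≤ α' t) :
    ∫ t in (0:ℝ)..T, (α' t / (1 + σ * α t))^2
      ≤ (1/(σ*ε)) * sSup ((fun t => α' t / (1 + σ * α t) ^ (1 - ε)) '' Set.Icc 0 T) := by
  set b : ℝ → ℝ := fun t => 1 + σ * α t with hbdef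
  have hcα : ContinuousOn α (Set.Icc 0 T) :=
    fun t ht => ((hd t ht).continuousAt).continuousWithinAt
  have hbpos : ∀ t ∈ Set.Icc (0:ℝ) T, 0 < b t := by
    intro t ht
    have h := mul_nonneg hσ.le (hαpos t ht)
    simp only [hbdef]; linarith
  have hcb : ContinuousOn b (Set.Icc 0 T) :=
    continuousOn_const.add (continuousOn_const.mul hcα)
  set I : ℝ → ℝ := fun t => α' t / b t ^ (1 - ε) with hIdef
  have hcI : ContinuousOn I (Set.Icc 0 T) :=
    hα'.div (hcb.rpow_const fun t ht => Or.inl (hbpos t ht).ne')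
      (fun t ht => (Real.rpow_pos_of_pos (hbpos t ht) _).ne')
  have h0mem : (0:ℝ) ∈ Set.Icc (0:ℝ) T := ⟨le_refl 0, hT.le⟩
  have hbdd : BddAbove (I '' Set.Icc 0 T) :=
    (isCompact_Icc.image_of_continuousOn hcI).bddAbove
  set M := sSup (I '' Set.Icc 0 T) with hMdef
  have hIM : ∀ t ∈ Set.Icc (0:ℝ) T, I t ≤ M := fun t ht => le_csSup hbdd ⟨t, ht, rfl⟩
  have hI0 : 0 ≤ I 0 :=
    div_nonneg (hα'pos 0 h0mem) (Real.rpow_pos_of_pos (hbpos 0 h0mem) _).le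
  have hM0 : 0 ≤ M := le_trans hI0 (hIM 0 h0mem)
  set f : ℝ → ℝ := fun t => α' t * b t ^ (-(1+ε)) with hfdef
  have hcf : ContinuousOn f (Set.Icc 0 T) :=
    hα'.mul (hcb.rpow_const fun t ht => Or.inl (hbpos t ht).ne')
  have hσε : σ * ε ≠ 0 := by positivity
  have hderiv : ∀ t ∈ Set.Icc (0:ℝ) T,
      HasDerivAt (fun s => (-(1/(σ*ε))) * b s ^ (-ε)) (f t) t := by
    intro t ht
    have h1 : HasDerivAt b (σ * α' t) t := ((hd t ht).const_mul σ).const_add 1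
    have h2 := (h1.rpow_const (p := -ε) (Or.inl (hbpos t ht).ne')).const_mul (-(1/(σ*ε)))
    refine h2.congr_deriv (Eq.symm ?_)
    rw [show -ε - 1 = -(1+ε) by ring]
    field_simp
    ring_nf
    simp only [hfdef]; ring_nf
  have huIcc : Set.uIcc (0:ℝ) T = Set.Icc 0 T := Set.uIcc_of_le hT.le
  have hfint : IntervalIntegrable f MeasureTheory.volume 0 T := by
    apply ContinuousOn.intervalIntegrable
    rwa [huIcc]
  have hFTC : ∫ t in (0:ℝ)..T, f t
      = (-(1/(σ*ε))) * b T ^ (-ε) - (-(1/(σ*ε))) * b 0 ^ (-ε) := by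
    apply intervalIntegral.integral_eq_sub_of_hasDerivAt
    · intro t ht; exact hderiv t (huIcc ▸ ht)
    · exact hfint
  have hb0 : b 0 = 1 := by simp [hbdef, hα0]
  have hintf_le : ∫ t in (0:ℝ)..T, f t ≤ 1/(σ*ε) := by
    rw [hFTC, hb0, Real.one_rpow]
    have h1 : 0 ≤ b T ^ (-ε) := (Real.rpow_pos_of_pos (hbpos T ⟨hT.le, le_refl T⟩) _).le
    have h2 : 0 < 1/(σ*ε) := by positivity
    nlinarith
  have hptwise : ∀ t ∈ Set.Icc (0:ℝ) T, (α' t / b t)^2 ≤ M * f t := by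
    intro t ht
    have hbp := hbpos t ht
    have heq : (α' t / b t)^2 = I t * f t := by
      have hmul : b t ^ (1-ε) * b t ^ (1+ε) = b t ^ 2 := by
        rw [← Real.rpow_add hbp, ← Real.rpow_natCast (b t) 2]; norm_num
      have h1 : b t ^ (1-ε) ≠ 0 := (Real.rpow_pos_of_pos hbp _).ne'
      have h2 : b t ^ (1+ε) ≠ 0 := (Real.rpow_pos_of_pos hbp _).ne'
      have hb' : b t ≠ 0 := hbp.ne'
      simp only [hIdef, hfdef]
      rw [Real.rpow_neg hbp.le]
      field_simp
      rw [← hmul]; ring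
    rw [heq]
    have hf0 : 0 ≤ f t :=
      mul_nonneg (hα'pos t ht) (Real.rpow_pos_of_pos hbp _).le
    exact mul_le_mul_of_nonneg_right (hIM t ht) hf0
  have hRint : IntervalIntegrable (fun t => (α' t / b t)^2) MeasureTheory.volume 0 T := by
    apply ContinuousOn.intervalIntegrable
    rw [huIcc]
    exact ((hα'.div hcb fun t ht => (hbpos t ht).ne').pow 2)
  have hMfint : IntervalIntegrable (fun t => M * f t) MeasureTheory.volume 0 T :=
    hfint.const_mul M
  calc ∫ t in (0:ℝ)..T, (α' t / b t)^2
      ≤ ∫ t in (0:ℝ)..T, M * f t := by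
        apply intervalIntegral.integral_mono_on hT.le hRint hMfint hptwise
    _ = M * ∫ t in (0:ℝ)..T, f t := intervalIntegral.integral_const_mul M f
    _ ≤ M * (1/(σ*ε)) := mul_le_mul_of_nonneg_left hintf_le hM0
    _ = (1/(σ*ε)) * M := mul_comm _ _
end

section
/- Let A ∈ ℝ^{3×3}, B, C appropriate, P = Pᵀ > 0 satisfy the matrix inequality xᵀP(Ax + Bw) - xᵀCᵀw - (3/4)xᵀCᵀCx ≤ 0 for all x ∈ ℝ³, w ∈ ℝ. If X : [0,∞) → ℝ³ solves X' = AX + B·W(CX) where W(v) = 1-(1+v)³, then V(X(t)) = ½X(t)ᵀPX(t) is nonincreasing, and integrating: V(X(τ)) - V(X(0)) + ∫₀^τ (CX(t))²·(3/2 + CX(t))² dt ≤ 0 for all τ > 0. -/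
open Matrix

theorem stmt_18 (A : Matrix (Fin 3) (Fin 3) ℝ) (B C : Fin 3 → ℝ)
    (P : Matrix (Fin 3) (Fin 3) ℝ) (hPsymm : P.IsSymm) (hPpos : P.PosDef)
    (hLure : ∀ (x : Fin 3 → ℝ) (w : ℝ),
      x ⬝ᵥ (P *ᵥ (A *ᵥ x + w • B)) - (C ⬝ᵥ x) * w - (3/4) * (C ⬝ᵥ x) ^ 2 ≤ 0)
    (X : ℝ → Fin 3 → ℝ)
    (hX : ∀ i, ∀ t : ℝ, HasDerivAt (fun s => X s i)
      ((A *ᵥ X t + (1 - (1 + C ⬝ᵥ X t) ^ 3) • B) i) t) :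
    AntitoneOn (fun t => (1/2) * (X t ⬝ᵥ (P *ᵥ X t))) (Set.Ici 0) ∧
    ∀ τ : ℝ, 0 < τ →
      (1/2) * (X τ ⬝ᵥ (P *ᵥ X τ)) - (1/2) * (X 0 ⬝ᵥ (P *ᵥ X 0))
        + (∫ t in (0:ℝ)..τ, (C ⬝ᵥ X t) ^ 2 * (3/2 + C ⬝ᵥ X t) ^ 2) ≤ 0 := by
  set f : ℝ → Fin 3 → ℝ := fun t => A *ᵥ X t + (1 - (1 + C ⬝ᵥ X t) ^ 3) • B with hf
  have hsym : ∀ i j, P i j = P j i := fun i j => hPsymm.apply j i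
  -- continuity of X components
  have hXc : ∀ i, Continuous fun t => X t i := fun i =>
    continuous_iff_continuousAt.mpr fun t => (hX i t).continuousAt
  have hfc : ∀ j, Continuous fun t => f t j := by
    intro j
    have hv : Continuous fun t => C ⬝ᵥ X t := by
      simp only [dotProduct]
      exact continuous_finset_sum _ fun i _ => (continuous_const.mul (hXc i))
    simp only [hf, Pi.add_apply, Pi.smul_apply, smul_eq_mul, mulVec, dotProduct]
    exact (continuous_finset_sum _ fun k _ => continuous_const.mul (hXc k)).add
      ((continuous_const.sub ((continuous_const.add hv).pow 3)).mul continuous_const)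
  have hgc : Continuous fun t => X t ⬝ᵥ (P *ᵥ f t) := by
    simp only [dotProduct, mulVec]
    exact continuous_finset_sum _ fun i _ => (hXc i).mul
      (continuous_finset_sum _ fun j _ => continuous_const.mul (hfc j))
  have hvc : Continuous fun t => C ⬝ᵥ X t := by
    simp only [dotProduct]
    exact continuous_finset_sum _ fun i _ => (continuous_const.mul (hXc i))
  -- derivative of V
  have hVd : ∀ t, HasDerivAt (fun s => (1/2) * (X s ⬝ᵥ (P *ᵥ X s)))
      (X t ⬝ᵥ (P *ᵥ f t)) t := by
    intro t
    have h1 : HasDerivAt (fun s => ∑ i, X s i * ∑ j, P i j * X s j)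
        (∑ i, (f t i * ∑ j, P i j * X t j + X t i * ∑ j, P i j * f t j)) t := by
      refine HasDerivAt.fun_sum fun i _ => ?_
      exact (hX i t).mul (HasDerivAt.fun_sum fun j _ => (hX j t).const_mul (P i j))
    have h2 := h1.const_mul (1/2 : ℝ)
    have key : (1/2 : ℝ) * (∑ i, (f t i * ∑ j, P i j * X t j + X t i * ∑ j, P i j * f t j))
        = X t ⬝ᵥ (P *ᵥ f t) := by
      have hswap : (∑ i, f t i * ∑ j, P i j * X t j) = ∑ i, X t i * ∑ j, P i j * f t j := by
        simp only [Finset.mul_sum]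
        rw [Finset.sum_comm]
        refine Finset.sum_congr rfl fun j _ => Finset.sum_congr rfl fun i _ => ?_
        rw [hsym i j]; ring
      rw [Finset.sum_add_distrib, hswap]
      simp only [dotProduct, mulVec]
      ring
    have heq : (fun s => (1/2 : ℝ) * (X s ⬝ᵥ (P *ᵥ X s)))
        = fun s => (1/2 : ℝ) * ∑ i, X s i * ∑ j, P i j * X s j := by
      funext s; simp only [dotProduct, mulVec]
    rw [heq, ← key]
    exact h2
  -- derivative bound
  have hg_le : ∀ t, X t ⬝ᵥ (P *ᵥ f t) ≤ -((C ⬝ᵥ X t) ^ 2 * (3/2 + C ⬝ᵥ X t) ^ 2) := by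
    intro t
    have h := hLure (X t) (1 - (1 + C ⬝ᵥ X t) ^ 3)
    set v := C ⬝ᵥ X t with hv
    nlinarith [h]
  have hg_nonpos : ∀ t, X t ⬝ᵥ (P *ᵥ f t) ≤ 0 := by
    intro t
    refine (hg_le t).trans ?_
    have := mul_nonneg (sq_nonneg (C ⬝ᵥ X t)) (sq_nonneg (3/2 + C ⬝ᵥ X t))
    linarith
  constructor
  · refine antitoneOn_of_deriv_nonpos (convex_Ici 0) ?_ ?_ ?_
    · exact Continuous.continuousOn (by
        simp only [dotProduct, mulVec]
        exact continuous_const.mul (continuous_finset_sum _ fun i _ => (hXc i).mul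
          (continuous_finset_sum _ fun j _ => continuous_const.mul (hXc j))))
    · exact fun t _ => ((hVd t).differentiableAt).differentiableWithinAt
    · intro t _
      rw [(hVd t).deriv]
      exact hg_nonpos t
  · intro τ hτ
    have hFTC : (∫ t in (0:ℝ)..τ, X t ⬝ᵥ (P *ᵥ f t))
        = (1/2) * (X τ ⬝ᵥ (P *ᵥ X τ)) - (1/2) * (X 0 ⬝ᵥ (P *ᵥ X 0)) :=
      intervalIntegral.integral_eq_sub_of_hasDerivAt (fun t _ => hVd t)
        (hgc.intervalIntegrable 0 τ)
    have hhc : Continuous fun t => (C ⬝ᵥ X t) ^ 2 * (3/2 + C ⬝ᵥ X t) ^ 2 :=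
      (hvc.pow 2).mul ((continuous_const.add hvc).pow 2)
    have hmono : (∫ t in (0:ℝ)..τ, (C ⬝ᵥ X t) ^ 2 * (3/2 + C ⬝ᵥ X t) ^ 2)
        ≤ ∫ t in (0:ℝ)..τ, -(X t ⬝ᵥ (P *ᵥ f t)) := by
      apply intervalIntegral.integral_mono_on hτ.le (hhc.intervalIntegrable 0 τ)
        (hgc.neg.intervalIntegrable 0 τ)
      intro t _
      simp only [Pi.neg_apply]
      linarith [hg_le t]
    rw [intervalIntegral.integral_neg, hFTC] at hmono
    linarith
end
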